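/- Let T > k ≥ 1 be integers, let V be a T×T diagonal matrix with positive diagonal entries, let F be a T×k real matrix of full column rank, and let G be a T×(T−k) real matrix with F' V^{-1} G = 0 and G' V^{-1} G = I_{T−k}. Let X be the ((T−k)(T−k+1)/2)×T matrix whose t-th column is vech(G' E_{t,t} G). Then M_{F,V} = G G' V^{-1}, and the Hadamard square of the GLS projection matrix satisfies M_{F,V}^{⊙2} = 2 (X' X) V^{-2}. -/

import Mathlib

open Matrix

noncomputable section

/-- Half-vectorization of a symmetric matrix, with diagonal entries scaled by `1/√2`,
indexed by pairs `(i, j)` with `i ≤ j`. -/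
def vech {m : ℕ} (Z : Matrix (Fin m) (Fin m) ℝ) :
    {q : Fin m × Fin m // q.1 ≤ q.2} → ℝ :=
  fun q => if q.val.1 = q.val.2 then Z q.val.1 q.val.2 / Real.sqrt 2 else Z q.val.1 q.val.2

private lemma aux_inv_diagonal {T : ℕ} (d : Fin T → ℝ) (hd : ∀ t, d t ≠ 0) :
    (Matrix.diagonal d)⁻¹ = Matrix.diagonal (fun t => (d t)⁻¹) := by
  apply Matrix.inv_eq_right_inv
  rw [Matrix.diagonal_mul_diagonal]
  have h : (fun i => d i * (d i)⁻¹) = fun _ => (1 : ℝ) := funext fun t => mul_inv_cancel₀ (hd t)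
  rw [h, Matrix.diagonal_one]

private lemma aux_inj {T k : ℕ} (F : Matrix (Fin T) (Fin k) ℝ) (hF : F.rank = k) :
    Function.Injective F.mulVecLin := by
  rw [← LinearMap.ker_eq_bot]
  have h := LinearMap.finrank_range_add_finrank_ker F.mulVecLin
  rw [Matrix.rank] at hF
  rw [hF] at h
  have hdom : Module.finrank ℝ (Fin k → ℝ) = k := by simp
  rw [hdom] at h
  have hker : Module.finrank ℝ (LinearMap.ker F.mulVecLin) = 0 := by omega
  exact Submodule.finrank_eq_zero.mp hker

private lemma aux_posdef {T k : ℕ} (d : Fin T → ℝ) (hd : ∀ t, 0 < d t)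
    (F : Matrix (Fin T) (Fin k) ℝ) (hinj : Function.Injective F.mulVecLin) :
    (Fᵀ * Matrix.diagonal (fun t => (d t)⁻¹) * F).PosDef := by
  rw [Matrix.posDef_iff_dotProduct_mulVec]
  constructor
  · unfold Matrix.IsHermitian
    rw [Matrix.conjTranspose_eq_transpose_of_trivial]
    simp [Matrix.transpose_mul, Matrix.diagonal_transpose, Matrix.mul_assoc]
  · intro x hx
    set y := F.mulVec x with hy
    have hyne : y ≠ 0 := by
      intro h
      apply hx
      apply hinj
      simpa [Matrix.mulVecLin_apply] using h
    have hq : (star x) ⬝ᵥ (Fᵀ * Matrix.diagonal (fun t => (d t)⁻¹) * F).mulVec x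
        = ∑ t, (d t)⁻¹ * (y t)^2 := by
      have hsx : (star x) = x := by
        funext i; simp
      rw [← Matrix.mulVec_mulVec, ← Matrix.mulVec_mulVec, Matrix.dotProduct_mulVec,
        Matrix.vecMul_transpose, hsx, ← hy]
      simp only [dotProduct, Matrix.mulVec_diagonal]
      exact Finset.sum_congr rfl fun t _ => by ring
    rw [hq]
    apply Finset.sum_pos'
    · intro t _
      exact mul_nonneg (inv_nonneg.mpr (hd t).le) (sq_nonneg _)
    · obtain ⟨t, ht⟩ := Function.ne_iff.mp hyne
      exact ⟨t, Finset.mem_univ t, mul_pos (inv_pos.mpr (hd t)) (sq_pos_of_ne_zero ht)⟩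

private lemma aux_proj {T k : ℕ} (hkT : k < T)
    (W : Matrix (Fin T) (Fin T) ℝ) (hW : Wᵀ = W)
    (F : Matrix (Fin T) (Fin k) ℝ)
    (G : Matrix (Fin T) (Fin (T - k)) ℝ)
    (hFG : Fᵀ * W * G = 0)
    (hGG : Gᵀ * W * G = 1)
    (hBinv : (Fᵀ * W * F)⁻¹ * (Fᵀ * W * F) = 1) :
    1 - F * (Fᵀ * W * F)⁻¹ * Fᵀ * W = G * Gᵀ * W := by
  have hGF : Gᵀ * W * F = 0 := by
    have := congrArg Matrix.transpose hFG
    rwa [Matrix.transpose_mul, Matrix.transpose_mul, Matrix.transpose_transpose, hW,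
      ← Matrix.mul_assoc, Matrix.transpose_zero] at this
  set B := Fᵀ * W * F with hB
  have e : Fin T ≃ Fin k ⊕ Fin (T - k) :=
    (finCongr (Nat.add_sub_cancel' hkT.le).symm).trans finSumFinEquiv.symm
  have key : fromRows (B⁻¹ * Fᵀ * W) (Gᵀ * W) * fromCols F G = 1 := by
    rw [fromRows_mul, Matrix.mul_fromCols, Matrix.mul_fromCols,
      fromRows_fromCols_eq_fromBlocks]
    have h11 : B⁻¹ * Fᵀ * W * F = 1 := by
      rw [Matrix.mul_assoc, Matrix.mul_assoc, ← Matrix.mul_assoc Fᵀ, ← hB, hBinv]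
    have h12 : B⁻¹ * Fᵀ * W * G = 0 := by
      rw [Matrix.mul_assoc, Matrix.mul_assoc, ← Matrix.mul_assoc Fᵀ, hFG, Matrix.mul_zero]
    rw [h11, h12, hGF, hGG, ← Matrix.fromBlocks_one]
  have key2 : fromCols F G * fromRows (B⁻¹ * Fᵀ * W) (Gᵀ * W) = 1 :=
    (fromCols_mul_fromRows_eq_one_comm e F G _ _).mpr key
  rw [fromCols_mul_fromRows] at key2
  have h1 : F * (B⁻¹ * Fᵀ * W) = F * B⁻¹ * Fᵀ * W := by
    rw [Matrix.mul_assoc, Matrix.mul_assoc, Matrix.mul_assoc]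
  rw [h1] at key2
  have h2 : G * (Gᵀ * W) = G * Gᵀ * W := by rw [Matrix.mul_assoc]
  rw [h2] at key2
  rw [sub_eq_iff_eq_add']
  exact key2.symm

private lemma aux_sum_pairs (m : ℕ) (c : Fin m → ℝ) :
    2 * (∑ q : {q : Fin m × Fin m // q.1 ≤ q.2},
        (if q.val.1 = q.val.2 then (c q.val.1 * c q.val.2) / 2 else c q.val.1 * c q.val.2))
      = (∑ a, c a)^2 := by
  classical
  set f : Fin m × Fin m → ℝ := fun q => c q.1 * c q.2 with hf
  have h1 : (∑ q : {q : Fin m × Fin m // q.1 ≤ q.2},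
      (if q.val.1 = q.val.2 then (c q.val.1 * c q.val.2) / 2 else c q.val.1 * c q.val.2))
      = ∑ q ∈ Finset.univ.filter (fun q : Fin m × Fin m => q.1 ≤ q.2),
        (if q.1 = q.2 then f q / 2 else f q) := by
    rw [← Finset.sum_subtype (Finset.univ.filter (fun q : Fin m × Fin m => q.1 ≤ q.2))
      (by intro x; simp) (fun q => if q.1 = q.2 then f q / 2 else f q)]
  have h2 : ∑ q ∈ Finset.univ.filter (fun q : Fin m × Fin m => q.1 ≤ q.2),
        (if q.1 = q.2 then f q / 2 else f q)
      = (∑ q ∈ Finset.univ.filter (fun q : Fin m × Fin m => q.1 = q.2), f q) / 2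
        + ∑ q ∈ Finset.univ.filter (fun q : Fin m × Fin m => q.1 < q.2), f q := by
    rw [Finset.sum_ite, Finset.filter_filter, Finset.filter_filter]
    congr 1
    · rw [← Finset.sum_div]
      congr 2
      apply Finset.filter_congr
      intro q _
      constructor
      · tauto
      · intro h; exact ⟨le_of_eq h, h⟩
    · apply Finset.sum_congr _ (fun _ _ => rfl)
      apply Finset.filter_congr
      intro q _
      constructor
      · intro h; exact lt_of_le_of_ne h.1 h.2
      · intro h; exact ⟨h.le, h.ne⟩
  have h3 : (∑ a, c a)^2 = ∑ q : Fin m × Fin m, f q := by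
    rw [sq, Finset.sum_mul_sum]
    exact (Fintype.sum_prod_type (f := f)).symm
  have h4 : ∑ q : Fin m × Fin m, f q
      = (∑ q ∈ Finset.univ.filter (fun q : Fin m × Fin m => q.1 = q.2), f q)
        + ∑ q ∈ Finset.univ.filter (fun q : Fin m × Fin m => q.1 < q.2), f q
        + ∑ q ∈ Finset.univ.filter (fun q : Fin m × Fin m => q.2 < q.1), f q := by
    rw [← Finset.sum_filter_add_sum_filter_not Finset.univ (fun q : Fin m × Fin m => q.1 ≤ q.2) f]
    congr 1
    · rw [← Finset.sum_filter_add_sum_filter_not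
        (Finset.univ.filter (fun q : Fin m × Fin m => q.1 ≤ q.2))
        (fun q : Fin m × Fin m => q.1 = q.2) f, Finset.filter_filter, Finset.filter_filter]
      congr 1
      · apply Finset.sum_congr _ (fun _ _ => rfl)
        apply Finset.filter_congr
        intro q _
        constructor
        · tauto
        · intro h; exact ⟨le_of_eq h, h⟩
      · apply Finset.sum_congr _ (fun _ _ => rfl)
        apply Finset.filter_congr
        intro q _
        constructor
        · intro h; exact lt_of_le_of_ne h.1 h.2
        · intro h; exact ⟨h.le, h.ne⟩
    · apply Finset.sum_congr _ (fun _ _ => rfl)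
      apply Finset.filter_congr
      intro q _
      exact not_le
  have h5 : ∑ q ∈ Finset.univ.filter (fun q : Fin m × Fin m => q.2 < q.1), f q
      = ∑ q ∈ Finset.univ.filter (fun q : Fin m × Fin m => q.1 < q.2), f q := by
    apply Finset.sum_nbij' (fun q => Prod.swap q) (fun q => Prod.swap q) <;>
      simp [hf, mul_comm]
  rw [h1, h2, h3, h4, h5]
  ring

theorem statement6 (T k : ℕ) (hk : 1 ≤ k) (hkT : k < T)
    (d : Fin T → ℝ) (hd : ∀ t, 0 < d t)
    (F : Matrix (Fin T) (Fin k) ℝ) (hF : F.rank = k)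
    (G : Matrix (Fin T) (Fin (T - k)) ℝ)
    (hFG : Fᵀ * (Matrix.diagonal d)⁻¹ * G = 0)
    (hGG : Gᵀ * (Matrix.diagonal d)⁻¹ * G = 1)
    (X : Matrix {q : Fin (T - k) × Fin (T - k) // q.1 ≤ q.2} (Fin T) ℝ)
    (hX : ∀ (t : Fin T) (q : {q : Fin (T - k) × Fin (T - k) // q.1 ≤ q.2}),
      X q t = vech (Gᵀ * Matrix.single t t (1 : ℝ) * G) q)
    (M : Matrix (Fin T) (Fin T) ℝ)
    (hM : M = 1 - F * (Fᵀ * (Matrix.diagonal d)⁻¹ * F)⁻¹ * Fᵀ * (Matrix.diagonal d)⁻¹) :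
    M = G * Gᵀ * (Matrix.diagonal d)⁻¹ ∧
      Matrix.hadamard M M =
        (2 : ℝ) • (Xᵀ * X * ((Matrix.diagonal d)⁻¹ * (Matrix.diagonal d)⁻¹)) := by
  classical
  set w : Fin T → ℝ := fun t => (d t)⁻¹ with hw
  have hWd : (Matrix.diagonal d)⁻¹ = Matrix.diagonal w := aux_inv_diagonal d (fun t => (hd t).ne')
  rw [hWd] at hFG hGG hM ⊢
  -- positive definiteness and invertibility of F' W F
  have hPD : (Fᵀ * Matrix.diagonal w * F).PosDef := aux_posdef d hd F (aux_inj F hF)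
  have hBinv : (Fᵀ * Matrix.diagonal w * F)⁻¹ * (Fᵀ * Matrix.diagonal w * F) = 1 :=
    Matrix.nonsing_inv_mul _ (Matrix.isUnit_iff_isUnit_det _ |>.mp hPD.isUnit)
  have part1 : M = G * Gᵀ * Matrix.diagonal w := by
    rw [hM]
    exact aux_proj hkT (Matrix.diagonal w) (Matrix.diagonal_transpose w) F G hFG hGG hBinv
  refine ⟨part1, ?_⟩
  -- entrywise computation for the Hadamard square
  ext s t
  have hMst : M s t = (∑ a, G s a * G t a) * w t := by
    rw [part1, Matrix.mul_diagonal, Matrix.mul_apply]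
    congr 1
  have hXentry : ∀ (u : Fin T) (q : {q : Fin (T - k) × Fin (T - k) // q.1 ≤ q.2}),
      X q u = if q.val.1 = q.val.2 then (G u q.val.1 * G u q.val.2) / Real.sqrt 2
        else G u q.val.1 * G u q.val.2 := by
    intro u q
    rw [hX u q]
    unfold vech
    have hZ : (Gᵀ * Matrix.single u u (1 : ℝ) * G) q.val.1 q.val.2
        = G u q.val.1 * G u q.val.2 := by
      simp only [Matrix.mul_apply, Matrix.transpose_apply, Matrix.single,
        Matrix.of_apply, ite_and, mul_ite, ite_mul, one_mul, mul_one, zero_mul, mul_zero,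
        Finset.sum_ite_eq, Finset.sum_ite_eq', Finset.mem_univ, if_true]
    rw [hZ]
  have hprod : ∀ q : {q : Fin (T - k) × Fin (T - k) // q.1 ≤ q.2},
      X q s * X q t = (if q.val.1 = q.val.2
        then ((G s q.val.1 * G t q.val.1) * (G s q.val.2 * G t q.val.2)) / 2
        else (G s q.val.1 * G t q.val.1) * (G s q.val.2 * G t q.val.2)) := by
    intro q
    rw [hXentry s q, hXentry t q]
    by_cases h : q.val.1 = q.val.2
    · rw [if_pos h, if_pos h, if_pos h]
      have h2 : Real.sqrt 2 * Real.sqrt 2 = 2 := Real.mul_self_sqrt (by norm_num)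
      rw [div_mul_div_comm, h2]
      ring
    · rw [if_neg h, if_neg h, if_neg h]
      ring
  have hXtX : (Xᵀ * X) s t = ∑ q, X q s * X q t := by
    rw [Matrix.mul_apply]
    apply Finset.sum_congr rfl
    intro q _
    rw [Matrix.transpose_apply]
  have hkey := aux_sum_pairs (T - k) (fun a => G s a * G t a)
  -- put everything together
  rw [Matrix.hadamard_apply, hMst, Matrix.smul_apply, Matrix.mul_apply]
  have hWW : ∀ j, ((Matrix.diagonal w * Matrix.diagonal w)) j t
      = if j = t then w t * w t else 0 := by
    intro j
    rw [Matrix.diagonal_mul_diagonal, Matrix.diagonal_apply]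
    by_cases h : j = t
    · rw [if_pos h, if_pos h, h]
    · rw [if_neg h, if_neg h]
  have hsum : ∑ j, (Xᵀ * X) s j * (Matrix.diagonal w * Matrix.diagonal w) j t
      = (Xᵀ * X) s t * (w t * w t) := by
    rw [Finset.sum_eq_single t]
    · rw [hWW t, if_pos rfl]
    · intro j _ hj; rw [hWW j, if_neg hj, mul_zero]
    · intro h; exact absurd (Finset.mem_univ t) h
  rw [hsum, hXtX]
  have : ∑ q, X q s * X q t = ∑ q : {q : Fin (T - k) × Fin (T - k) // q.1 ≤ q.2},
      (if q.val.1 = q.val.2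
        then ((G s q.val.1 * G t q.val.1) * (G s q.val.2 * G t q.val.2)) / 2
        else (G s q.val.1 * G t q.val.1) * (G s q.val.2 * G t q.val.2)) :=
    Finset.sum_congr rfl fun q _ => hprod q
  rw [this, smul_eq_mul]
  linear_combination (-(w t * w t)) * hkey

end
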